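/- For each integer n ≥ 0 and parameter α, the higher-order Bernoulli number B_n^{(α)} = B_n^{(α)}(0) satisfies B_n^{(α)} = Σ_{i=0}^{n} ⟨−α⟩_i · (n!/(n+i)!) · Σ_{j=0}^{i} (−1)^{i−j} C(n+i, i−j) S(n+j, j). -/

import Mathlib

open Finset

/-- Stirling numbers of the second kind `S(n,k)`. -/
def stirling : ℕ → ℕ → ℕ
  | 0, 0 => 1
  | 0, _ + 1 => 0
  | _ + 1, 0 => 0
  | n + 1, k + 1 => (k + 1) * stirling n (k + 1) + stirling n k

/-- The falling factorial `⟨x⟩_i = x (x-1) ⋯ (x-i+1)`, with `⟨x⟩_0 = 1`. -/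
def fallingFac (x : ℝ) (i : ℕ) : ℝ := ∏ k ∈ Finset.range i, (x - k)

/-- The function `(e^t - 1)/t`, extended by the value `1` at `t = 0`. -/
noncomputable def expm1Div (t : ℝ) : ℝ := if t = 0 then 1 else (Real.exp t - 1) / t

/-- The higher-order Bernoulli polynomial `B_n^{(α)}(x)`, defined via the generating
function `(t/(eᵗ-1))^α e^{xt} = ∑ B_n^{(α)}(x) tⁿ/n!`, i.e. as the `n`-th derivative
of `((eᵗ-1)/t)^{-α} e^{xt}` at `t = 0`. -/
noncomputable def higherBernoulli (n : ℕ) (α x : ℝ) : ℝ :=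
  iteratedDeriv n (fun t => expm1Div t ^ (-α) * Real.exp (x * t)) 0

/-- The higher-order Euler polynomial `E_n^{(α)}(x)`, defined via the generating
function `(2/(eᵗ+1))^α e^{xt} = ∑ E_n^{(α)}(x) tⁿ/n!`. -/
noncomputable def higherEuler (n : ℕ) (α x : ℝ) : ℝ :=
  iteratedDeriv n (fun t => ((Real.exp t + 1) / 2) ^ (-α) * Real.exp (x * t)) 0


set_option maxHeartbeats 1000000

open Filter
open scoped ContDiff

variable {f g : ℝ → ℝ}


variable {f g : ℝ → ℝ}

lemma cdNat (n : ℕ) (hf : ContDiff ℝ ∞ f) : ContDiff ℝ n f :=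
  hf.of_le (by exact_mod_cast le_top)

lemma iteratedDeriv_const' (n : ℕ) (c x : ℝ) :
    iteratedDeriv n (fun _ => c) x = if n = 0 then c else 0 := by
  induction n generalizing c x with
  | zero => simp
  | succ n ih =>
    rw [iteratedDeriv_succ']
    simp only [deriv_const']
    rw [ih]
    simp

lemma iteratedDeriv_add' {n : ℕ} (hf : ContDiff ℝ ∞ f) (hg : ContDiff ℝ ∞ g) (x : ℝ) :
    iteratedDeriv n (fun t => f t + g t) x = iteratedDeriv n f x + iteratedDeriv n g x := by
  have := iteratedDerivWithin_add (n := n) (Set.mem_univ x) uniqueDiffOn_univ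
    (cdNat n hf).contDiffWithinAt (cdNat n hg).contDiffWithinAt
  simp only [iteratedDerivWithin_univ] at this
  exact this

lemma iteratedDeriv_cmul {n : ℕ} (hf : ContDiff ℝ ∞ f) (c : ℝ) (x : ℝ) :
    iteratedDeriv n (fun t => c * f t) x = c * iteratedDeriv n f x := by
  have := iteratedDerivWithin_const_mul (n := n) (Set.mem_univ x) uniqueDiffOn_univ c
    (cdNat n hf).contDiffWithinAt
  simpa [iteratedDerivWithin_univ] using this

lemma iteratedDeriv_sum' {ι : Type*} (s : Finset ι) (F : ι → ℝ → ℝ)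
    (hF : ∀ i ∈ s, ContDiff ℝ ∞ (F i)) (n : ℕ) (x : ℝ) :
    iteratedDeriv n (fun t => ∑ i ∈ s, F i t) x = ∑ i ∈ s, iteratedDeriv n (F i) x := by
  induction s using Finset.cons_induction with
  | empty => simp [iteratedDeriv_const']
  | cons a s ha ih =>
    simp only [Finset.sum_cons]
    have h1 : ContDiff ℝ ∞ (F a) := hF a (Finset.mem_cons_self a s)
    have h2 : ContDiff ℝ ∞ (fun t => ∑ i ∈ s, F i t) :=
      ContDiff.sum fun i hi => hF i (Finset.mem_cons_of_mem hi)
    rw [iteratedDeriv_add' h1 h2, ih fun i hi => hF i (Finset.mem_cons_of_mem hi)]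

lemma pascal_sum (F G : ℕ → ℝ) (n : ℕ) :
    (∑ k ∈ range (n+1), (n.choose k : ℝ) * (F (k+1) * G (n-k)))
      + (∑ k ∈ range (n+1), (n.choose k : ℝ) * (F k * G (n+1-k)))
    = ∑ k ∈ range (n+2), ((n+1).choose k : ℝ) * (F k * G (n+1-k)) := by
  rw [Finset.sum_range_succ' (fun k => ((n+1).choose k : ℝ) * (F k * G (n+1-k))) (n+1)]
  have e1 : ∀ k, (((n+1).choose (k+1) : ℝ)) = (n.choose k : ℝ) + (n.choose (k+1) : ℝ) := by
    intro k; rw [Nat.choose_succ_succ]; push_cast; ring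
  have e2 : ∀ k, n + 1 - (k + 1) = n - k := fun k => by omega
  have step1 : (∑ k ∈ range (n+1), (n.choose k:ℝ) * (F k * G (n+1-k)))
      = (∑ k ∈ range (n+1), (n.choose (k+1) : ℝ) * (F (k+1) * G (n-k)))
        + (n.choose 0 : ℝ) * (F 0 * G (n+1)) := by
    rw [Finset.sum_range_succ' (fun k => (n.choose k:ℝ) * (F k * G (n+1-k))) n,
      Finset.sum_range_succ (fun k => (n.choose (k+1):ℝ) * (F (k+1) * G (n-k))) n]
    simp only [e2, Nat.sub_self, Nat.choose_succ_self, Nat.cast_zero, zero_mul, add_zero,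
      Nat.sub_zero]
  rw [step1, ← add_assoc, ← Finset.sum_add_distrib]
  congr 1
  · apply Finset.sum_congr rfl
    intro k _
    rw [e1, e2]
    ring
  · simp

lemma iteratedDeriv_mul' (hf : ContDiff ℝ ∞ f) (hg : ContDiff ℝ ∞ g) (n : ℕ) (x : ℝ) :
    iteratedDeriv n (fun t => f t * g t) x
      = ∑ k ∈ range (n+1), (n.choose k : ℝ) * (iteratedDeriv k f x * iteratedDeriv (n-k) g x) := by
  induction n generalizing f g with
  | zero => simp
  | succ n ih =>
    have hf' : ContDiff ℝ ∞ (deriv f) := (contDiff_infty_iff_deriv.mp hf).2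
    have hg' : ContDiff ℝ ∞ (deriv g) := (contDiff_infty_iff_deriv.mp hg).2
    have hd : deriv (fun t => f t * g t) = fun t => deriv f t * g t + f t * deriv g t := by
      funext t
      exact deriv_fun_mul (hf.differentiable (by simp) t)
        (hg.differentiable (by simp) t)
    rw [iteratedDeriv_succ', hd]
    rw [iteratedDeriv_add' (hf'.mul hg) (hf.mul hg'), ih hf' hg, ih hf hg']
    have h1 : ∀ k (u : ℝ → ℝ), iteratedDeriv k (deriv u) x = iteratedDeriv (k+1) u x := by
      intro k u; rw [iteratedDeriv_succ']
    simp only [h1]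
    rw [show n + 1 + 1 = n + 2 from rfl,
      ← pascal_sum (fun k => iteratedDeriv k f x) (fun k => iteratedDeriv k g x) n]
    congr 1
    apply Finset.sum_congr rfl
    intro k hk
    have hk' : k ≤ n := Finset.mem_range_succ_iff.mp hk
    rw [show n - k + 1 = n + 1 - k by omega]



noncomputable def ecoef : ℕ → ℝ := fun n => ((n + 1).factorial : ℝ)⁻¹

lemma expm1Div_hasSum (y : ℝ) :
    HasSum (fun n : ℕ => ecoef n • y ^ n) (expm1Div y) := by
  have h := NormedSpace.expSeries_div_hasSum_exp y
  rw [← Real.exp_eq_exp_ℝ] at h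
  rcases eq_or_ne y 0 with rfl | hy
  · have : (fun n : ℕ => ecoef n • (0:ℝ) ^ n) =
        fun n => if n = 0 then (1:ℝ) else 0 := by
      funext n; cases n <;> simp [ecoef]
    rw [this, expm1Div]
    simpa using hasSum_ite_eq (0 : ℕ) (1:ℝ)
  · have h1 : HasSum (fun n : ℕ => y ^ (n+1) / ((n+1).factorial : ℝ)) (Real.exp y - 1) := by
      have h' : HasSum (fun n : ℕ => y ^ n / (n.factorial : ℝ)) (Real.exp y) := by
        simpa using h
      have := (hasSum_nat_add_iff' 1).2 h'
      simpa using this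
    have h2 := h1.div_const y
    rw [expm1Div, if_neg hy]
    convert h2 using 2 with n
    · rfl
    rw [ecoef, smul_eq_mul, pow_succ]
    field_simp

lemma contDiff_expm1Div : ContDiff ℝ ∞ expm1Div := by
  have hrad : (FormalMultilinearSeries.ofScalars ℝ ecoef).radius = ⊤ := by
    apply FormalMultilinearSeries.ofScalars_radius_eq_top_of_tendsto
    · exact Eventually.of_forall fun n => by rw [ecoef]; positivity
    · have he : (fun n : ℕ => ‖ecoef n.succ‖ / ‖ecoef n‖) = fun n => ((n + 2 : ℕ) : ℝ)⁻¹ := by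
        funext n
        have h1 : ((n + 1 + 1).factorial : ℝ) = ((n+2 : ℕ) : ℝ) * ((n+1).factorial : ℝ) := by
          push_cast [Nat.factorial_succ]; ring
        rw [ecoef, ecoef, Real.norm_eq_abs, Real.norm_eq_abs,
          abs_of_nonneg (by positivity), abs_of_nonneg (by positivity), div_eq_iff (by positivity)]
        rw [Nat.succ_eq_add_one, h1]
        field_simp
      rw [he]
      have h2 : Tendsto (fun n : ℕ => ((n + 2 : ℕ) : ℝ)) atTop atTop :=
        tendsto_natCast_atTop_atTop.comp (tendsto_add_atTop_nat 2)
      exact h2.inv_tendsto_atTop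
  have hball : HasFPowerSeriesOnBall expm1Div (FormalMultilinearSeries.ofScalars ℝ ecoef) 0 ⊤ := by
    refine ⟨le_of_eq hrad.symm, ENNReal.zero_lt_top, ?_⟩
    intro y _
    rw [FormalMultilinearSeries.ofScalars_apply_eq']
    simpa using expm1Div_hasSum y
  rw [contDiff_iff_contDiffAt]
  intro x
  have : AnalyticAt ℝ expm1Div x := by
    apply hball.analyticAt_of_mem
    simp
  exact this.contDiffAt

lemma expm1Div_pos (t : ℝ) : 0 < expm1Div t := by
  rcases lt_trichotomy t 0 with ht | rfl | ht
  · rw [expm1Div, if_neg ht.ne]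
    apply div_pos_of_neg_of_neg _ ht
    · simpa using Real.exp_lt_one_iff.mpr ht
  · simp [expm1Div]
  · rw [expm1Div, if_neg ht.ne']
    apply div_pos _ ht
    simpa using Real.one_lt_exp_iff.mpr ht

noncomputable def td (f : ℝ → ℝ) (n : ℕ) : ℝ := iteratedDeriv n f 0 / n.factorial

lemma td_mul (hf : ContDiff ℝ ∞ f) (hg : ContDiff ℝ ∞ g) (n : ℕ) :
    td (fun t => f t * g t) n = ∑ k ∈ range (n+1), td f k * td g (n-k) := by
  rw [td, iteratedDeriv_mul' hf hg n 0, Finset.sum_div]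
  apply Finset.sum_congr rfl
  intro k hk
  have hk' : k ≤ n := Finset.mem_range_succ_iff.mp hk
  rw [td, td]
  have h := Nat.choose_mul_factorial_mul_factorial hk'
  have hcast : (n.choose k : ℝ) * (k.factorial : ℝ) * ((n-k).factorial : ℝ)
      = (n.factorial : ℝ) := by exact_mod_cast congrArg Nat.cast h
  field_simp
  linear_combination (iteratedDeriv k f 0 * iteratedDeriv (n - k) g 0) * hcast

lemma td_cmul (hf : ContDiff ℝ ∞ f) (c : ℝ) (n : ℕ) :
    td (fun t => c * f t) n = c * td f n := by
  rw [td, iteratedDeriv_cmul hf c 0, td]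
  ring

lemma td_sum {ι : Type*} (s : Finset ι) (F : ι → ℝ → ℝ)
    (hF : ∀ i ∈ s, ContDiff ℝ ∞ (F i)) (n : ℕ) :
    td (fun t => ∑ i ∈ s, F i t) n = ∑ i ∈ s, td (F i) n := by
  rw [td, iteratedDeriv_sum' s F hF n 0, Finset.sum_div]
  rfl

lemma td_one (n : ℕ) : td (fun _ => (1:ℝ)) n = if n = 0 then 1 else 0 := by
  rw [td, iteratedDeriv_const']
  split <;> simp_all

lemma td_deriv (hf : ContDiff ℝ ∞ f) (n : ℕ) :
    td (deriv f) n = (n+1 : ℝ) * td f (n+1) := by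
  rw [td, td, ← iteratedDeriv_succ', Nat.factorial_succ]
  push_cast
  have : ((n+1:ℝ)) * (n.factorial : ℝ) ≠ 0 := by positivity
  field_simp

lemma td_id (k : ℕ) : td (fun t : ℝ => t) k = if k = 1 then 1 else 0 := by
  match k with
  | 0 => simp [td]
  | 1 => simp [td, iteratedDeriv_one]
  | (k+2) =>
    rw [td, iteratedDeriv_succ']
    have : deriv (fun t : ℝ => t) = fun _ => (1:ℝ) := by
      funext t; simp
    rw [this, iteratedDeriv_const']
    simp

lemma td_shift {v : ℝ → ℝ} (hv : ContDiff ℝ ∞ v) (m : ℕ) :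
    td (fun t => t * v t) (m+1) = td v m := by
  rw [td_mul (f := fun t : ℝ => t) contDiff_id hv]
  rw [Finset.sum_eq_single 1]
  · simp [td_id]
  · intro k _ hk
    rw [td_id, if_neg hk, zero_mul]
  · intro h
    exfalso
    exact h (by simp [Nat.lt_succ_iff])

lemma td_shift0 {v : ℝ → ℝ} (hv : ContDiff ℝ ∞ v) :
    td (fun t => t * v t) 0 = 0 := by
  simp [td]

lemma td_pow_shift {u : ℝ → ℝ} (hu : ContDiff ℝ ∞ u) (i : ℕ) (n : ℕ) :
    td (fun t => t ^ i * u t) (n + i) = td u n := by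
  induction i generalizing u with
  | zero => simp only [pow_zero, one_mul, Nat.add_zero]
  | succ i ih =>
    have hv : ContDiff ℝ ∞ (fun t => t ^ i * u t) := (contDiff_id.pow i).mul hu
    have : (fun t : ℝ => t ^ (i+1) * u t) = fun t => t * ((fun s => s ^ i * u s) t) := by
      funext t; ring
    rw [this, show n + (i+1) = (n+i) + 1 by omega, td_shift hv, ih hu]


lemma stirling_identity (m j : ℕ) :
    ∑ l ∈ range (j+1), (-1:ℝ)^(j-l) * (j.choose l : ℝ) * (l:ℝ)^m
      = (j.factorial : ℝ) * stirling m j := by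
  induction m generalizing j with
  | zero =>
    match j with
    | 0 => simp [stirling]
    | j+1 =>
      have halt : ∑ l ∈ range (j+2), (-1:ℝ)^l * ((j+1).choose l : ℝ) = 0 := by
        have := Int.alternating_sum_range_choose (n := j+1)
        rw [if_neg (Nat.succ_ne_zero j)] at this
        exact_mod_cast congrArg (Int.cast : ℤ → ℝ) this
      have hrefl : ∑ l ∈ range (j+2), (-1:ℝ)^(j+1-l) * ((j+1).choose l : ℝ) * (l:ℝ)^0
          = ∑ l ∈ range (j+2), (-1:ℝ)^l * ((j+1).choose l : ℝ) := by
        rw [← Finset.sum_range_reflect (fun l => (-1:ℝ)^l * ((j+1).choose l : ℝ)) (j+2)]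
        apply Finset.sum_congr rfl
        intro l hl
        have hl' : l ≤ j + 1 := Finset.mem_range_succ_iff.mp hl
        rw [pow_zero, mul_one, show j + 2 - 1 - l = j + 1 - l by omega,
          Nat.choose_symm hl']
      rw [hrefl, halt, show stirling 0 (j+1) = 0 from rfl]
      simp
  | succ m ih =>
    match j with
    | 0 => simp [stirling]
    | j+1 =>
      have hchoose : ∀ l, l ≤ j+1 → ((j+1).choose l : ℝ) * l
          = (j+1 : ℝ) * (((j+1).choose l : ℝ) - (j.choose l : ℝ)) := by
        intro l hl
        match l with
        | 0 => simp
        | l+1 =>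
          have h1 : (j+1) * j.choose l = (j+1).choose (l+1) * (l+1) :=
            Nat.add_one_mul_choose_eq j l
          have h2 : (j+1).choose (l+1) = j.choose l + j.choose (l+1) :=
            Nat.choose_succ_succ j l
          have h1' : ((j:ℝ)+1) * (j.choose l : ℝ) = ((j+1).choose (l+1) : ℝ) * ((l:ℝ)+1) := by
            exact_mod_cast congrArg Nat.cast h1
          have h2' : ((j+1).choose (l+1) : ℝ) = (j.choose l : ℝ) + (j.choose (l+1) : ℝ) := by
            exact_mod_cast congrArg Nat.cast h2
          push_cast
          nlinarith [h1', h2']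
      have step : ∑ l ∈ range (j+2), (-1:ℝ)^(j+1-l) * ((j+1).choose l : ℝ) * (l:ℝ)^(m+1)
          = (j+1:ℝ) * (∑ l ∈ range (j+2), (-1:ℝ)^(j+1-l) * ((j+1).choose l : ℝ) * (l:ℝ)^m)
            - (j+1:ℝ) * (∑ l ∈ range (j+2), (-1:ℝ)^(j+1-l) * (j.choose l : ℝ) * (l:ℝ)^m) := by
        rw [Finset.mul_sum, Finset.mul_sum, ← Finset.sum_sub_distrib]
        apply Finset.sum_congr rfl
        intro l hl
        have hl' : l ≤ j + 1 := Finset.mem_range_succ_iff.mp hl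
        have := hchoose l hl'
        calc (-1:ℝ)^(j+1-l) * ((j+1).choose l : ℝ) * (l:ℝ)^(m+1)
            = (-1:ℝ)^(j+1-l) * (((j+1).choose l : ℝ) * l) * (l:ℝ)^m := by ring
          _ = _ := by rw [this]; ring
      have hlast : ∑ l ∈ range (j+2), (-1:ℝ)^(j+1-l) * (j.choose l : ℝ) * (l:ℝ)^m
          = - ∑ l ∈ range (j+1), (-1:ℝ)^(j-l) * (j.choose l : ℝ) * (l:ℝ)^m := by
        rw [Finset.sum_range_succ, Nat.choose_succ_self]
        simp only [Nat.cast_zero, mul_zero, zero_mul, add_zero]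
        rw [← Finset.sum_neg_distrib]
        apply Finset.sum_congr rfl
        intro l hl
        have hl' : l ≤ j := Finset.mem_range_succ_iff.mp hl
        rw [show j + 1 - l = (j - l) + 1 by omega, pow_succ]
        ring
      rw [step, hlast, ih j, ih (j+1)]
      have hs : (stirling (m+1) (j+1) : ℝ)
          = (j+1 : ℝ) * (stirling m (j+1) : ℝ) + (stirling m j : ℝ) := by
        rw [show stirling (m+1) (j+1) = (j+1) * stirling m (j+1) + stirling m j from rfl]
        push_cast; ring
      have hf : ((j+1).factorial : ℝ) = ((j:ℝ)+1) * (j.factorial : ℝ) := by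
        rw [Nat.factorial_succ]; push_cast; ring
      rw [hs, hf]
      ring

lemma contDiff_exp_mul (l : ℕ) : ContDiff ℝ ∞ (fun t : ℝ => Real.exp ((l:ℝ) * t)) :=
  Real.contDiff_exp.comp (contDiff_const.mul contDiff_id)

lemma td_exp_mul (l : ℕ) (m : ℕ) :
    td (fun t : ℝ => Real.exp ((l:ℝ) * t)) m = (l:ℝ)^m / m.factorial := by
  rw [td, iteratedDeriv_comp_const_mul Real.contDiff_exp ((l:ℝ))]
  rw [iteratedDeriv_eq_iterate, Real.iter_deriv_exp]
  simp

lemma contDiff_Ej (j : ℕ) : ContDiff ℝ ∞ (fun t => (Real.exp t - 1)^j) :=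
  (Real.contDiff_exp.sub contDiff_const).pow j

lemma td_Ej (j m : ℕ) : td (fun t => (Real.exp t - 1)^j) m
    = (j.factorial : ℝ) * (stirling m j : ℝ) / m.factorial := by
  have hexp : (fun t => (Real.exp t - 1)^j)
      = fun t => ∑ l ∈ range (j+1), ((j.choose l : ℝ) * (-1:ℝ)^(j-l)) * Real.exp ((l:ℝ) * t) := by
    funext t
    rw [sub_eq_add_neg, add_pow]
    apply Finset.sum_congr rfl
    intro l _
    rw [← Real.exp_nat_mul]
    ring
  rw [hexp, td_sum _ _ (fun l _ => contDiff_const.mul (contDiff_exp_mul l))]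
  have : ∀ l ∈ range (j+1), td (fun t => ((j.choose l : ℝ) * (-1:ℝ)^(j-l)) * Real.exp ((l:ℝ) * t)) m
      = (-1:ℝ)^(j-l) * (j.choose l : ℝ) * (l:ℝ)^m / m.factorial := by
    intro l _
    rw [td_cmul (contDiff_exp_mul l), td_exp_mul]
    ring
  rw [Finset.sum_congr rfl this, ← Finset.sum_div, stirling_identity]

noncomputable def DD : ℝ → ℝ := fun t => expm1Div t - 1

lemma contDiff_DD : ContDiff ℝ ∞ DD := contDiff_expm1Div.sub contDiff_const

lemma t_mul_expm1Div (t : ℝ) : t * expm1Div t = Real.exp t - 1 := by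
  rcases eq_or_ne t 0 with rfl | ht
  · simp [expm1Div]
  · rw [expm1Div, if_neg ht]
    field_simp

lemma t_mul_DD (t : ℝ) : t * DD t = (Real.exp t - 1) + (-t) := by
  have := t_mul_expm1Div t
  rw [DD]
  ring_nf
  nlinarith [this]

lemma td_Dpow (i n : ℕ) : td (fun t => DD t ^ i) n
    = ∑ j ∈ range (i+1), (i.choose j : ℝ) * (-1:ℝ)^(i-j) *
        ((j.factorial : ℝ) * (stirling (n+j) j : ℝ) / ((n+j).factorial : ℝ)) := by
  have h1 : td (fun t => DD t ^ i) n = td (fun t => t^i * DD t ^ i) (n+i) :=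
    (td_pow_shift (contDiff_DD.pow i) i n).symm
  have hfun : (fun t : ℝ => t^i * DD t^i)
      = fun t => ∑ j ∈ range (i+1),
          ((i.choose j : ℝ) * (-1:ℝ)^(i-j)) * (t^(i-j) * (Real.exp t - 1)^j) := by
    funext t
    rw [← mul_pow, t_mul_DD, add_pow]
    apply Finset.sum_congr rfl
    intro j _
    rw [neg_pow]
    ring
  rw [h1, hfun, td_sum (range (i+1))
    (fun j t => ((i.choose j : ℝ) * (-1:ℝ)^(i-j)) * (t^(i-j) * (Real.exp t - 1)^j))
    (fun j _ => contDiff_const.mul (((contDiff_id).pow _).mul (contDiff_Ej j)))]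
  apply Finset.sum_congr rfl
  intro j hj
  have hj' : j ≤ i := Finset.mem_range_succ_iff.mp hj
  rw [td_cmul (f := fun t => t^(i-j) * (Real.exp t - 1)^j)
      ((contDiff_id.pow _).mul (contDiff_Ej j)),
    show n + i = (n + j) + (i - j) by omega,
    td_pow_shift (contDiff_Ej j) (i-j) (n+j), td_Ej]

lemma td_DD_zero : td DD 0 = 0 := by
  simp [td, DD, expm1Div]

lemma td_Dpow_vanish : ∀ i n : ℕ, n < i → td (fun t => DD t ^ i) n = 0 := by
  intro i
  induction i with
  | zero => intro n h; omega
  | succ i ih =>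
    intro n h
    have hsplit : (fun t => DD t ^ (i+1)) = fun t => DD t ^ i * DD t := by
      funext t; rw [pow_succ]
    rw [hsplit, td_mul (contDiff_DD.pow i) contDiff_DD]
    apply Finset.sum_eq_zero
    intro k hk
    have hk' : k ≤ n := Finset.mem_range_succ_iff.mp hk
    rcases lt_or_ge k i with hki | hki
    · rw [ih k hki, zero_mul]
    · have : k = n ∧ k = i := by omega
      rw [this.1, Nat.sub_self]
      have : td DD 0 = 0 := td_DD_zero
      rw [show td DD 0 = 0 from this]
      ring
lemma contDiff_deriv_expm1Div : ContDiff ℝ ∞ (deriv expm1Div) :=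
  (contDiff_infty_iff_deriv.mp contDiff_expm1Div).2

lemma deriv_DD_eq : deriv DD = deriv expm1Div := by
  funext t
  rw [show DD = fun t => expm1Div t - 1 from rfl]
  exact deriv_sub_const _

lemma deriv_Dpow (i : ℕ) :
    deriv (fun t => DD t ^ (i+1)) = fun t => ((i:ℝ)+1) * (DD t ^ i * deriv expm1Div t) := by
  funext t
  have hd : HasDerivAt DD (deriv expm1Div t) t := by
    have := (contDiff_DD.differentiable (by simp) t).hasDerivAt
    rwa [deriv_DD_eq] at this
  have := (hd.fun_pow (i+1)).deriv
  rw [this]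
  push_cast [Nat.add_sub_cancel]
  ring


lemma fallingFac_succ (y : ℝ) (i : ℕ) : fallingFac y (i+1) = y * fallingFac (y-1) i := by
  rw [fallingFac, fallingFac, Finset.prod_range_succ']
  simp only [Nat.cast_zero, sub_zero]
  rw [mul_comm]
  congr 1
  apply Finset.prod_congr rfl
  intro k _
  push_cast
  ring

lemma contDiff_rpow_expm1Div (y : ℝ) : ContDiff ℝ ∞ (fun t => expm1Div t ^ y) := by
  rw [contDiff_iff_contDiffAt]
  intro x
  exact contDiff_expm1Div.contDiffAt.rpow_const_of_ne (expm1Div_pos x).ne'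

lemma deriv_rpow_expm1Div (y : ℝ) :
    deriv (fun t => expm1Div t ^ y) = fun t => y * (expm1Div t ^ (y-1) * deriv expm1Div t) := by
  funext t
  have hd : HasDerivAt expm1Div (deriv expm1Div t) t :=
    (contDiff_expm1Div.differentiable (by simp) t).hasDerivAt
  have h2 := hd.rpow_const (p := y) (Or.inl (expm1Div_pos t).ne')
  rw [h2.deriv]
  ring

lemma key (n : ℕ) : ∀ y : ℝ, td (fun t => expm1Div t ^ y) n
    = ∑ i ∈ range (n+1), fallingFac y i / (i.factorial : ℝ) * td (fun t => DD t ^ i) n := by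
  induction n using Nat.strong_induction_on with
  | _ n ih =>
    rcases n with _ | m
    · intro y
      simp [td, fallingFac, expm1Div]
    · intro y
      have hm1 : ((m:ℝ)+1) ≠ 0 := by positivity
      have hstep : ((m:ℝ)+1) * td (fun t => expm1Div t ^ y) (m+1)
          = y * td (fun t => expm1Div t ^ (y-1) * deriv expm1Div t) m := by
        have h1 := td_deriv (contDiff_rpow_expm1Div y) m
        rw [deriv_rpow_expm1Div y] at h1
        rw [td_cmul (f := fun t => expm1Div t ^ (y-1) * deriv expm1Div t)
            ((contDiff_rpow_expm1Div (y-1)).mul contDiff_deriv_expm1Div) y] at h1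
        push_cast at h1 ⊢
        linarith [h1]
      have hIH : ∀ k ∈ range (m+1), td (fun t => expm1Div t ^ (y-1)) k
          = ∑ i ∈ range (m+1), fallingFac (y-1) i / (i.factorial:ℝ) * td (fun t => DD t ^ i) k := by
        intro k hk
        have hk' : k < m+1 := Finset.mem_range.mp hk
        rw [ih k hk' (y-1)]
        apply Finset.sum_subset
        · exact Finset.range_subset_range.mpr (by omega)
        · intro i _ hi
          have hki : k < i := by
            by_contra hcon
            exact hi (Finset.mem_range.mpr (by omega))
          rw [td_Dpow_vanish i k hki, mul_zero]
      have hswap : td (fun t => expm1Div t ^ (y-1) * deriv expm1Div t) m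
          = ∑ i ∈ range (m+1), fallingFac (y-1) i / (i.factorial:ℝ) *
              (∑ k ∈ range (m+1), td (fun t => DD t ^ i) k * td (deriv expm1Div) (m-k)) := by
        rw [td_mul (contDiff_rpow_expm1Div (y-1)) contDiff_deriv_expm1Div m]
        calc ∑ k ∈ range (m+1), td (fun t => expm1Div t ^ (y-1)) k * td (deriv expm1Div) (m-k)
            = ∑ k ∈ range (m+1), ∑ i ∈ range (m+1),
                fallingFac (y-1) i / (i.factorial:ℝ) *
                  (td (fun t => DD t ^ i) k * td (deriv expm1Div) (m-k)) := by
              apply Finset.sum_congr rfl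
              intro k hk
              rw [hIH k hk, Finset.sum_mul]
              apply Finset.sum_congr rfl
              intro i _
              ring
          _ = _ := by
              rw [Finset.sum_comm]
              apply Finset.sum_congr rfl
              intro i _
              rw [Finset.mul_sum]
      have hDp : ∀ i : ℕ, td (fun t => DD t ^ i * deriv expm1Div t) m
          = ((m:ℝ)+1) / ((i:ℝ)+1) * td (fun t => DD t^(i+1)) (m+1) := by
        intro i
        have h1 := td_deriv (contDiff_DD.pow (i+1)) m
        rw [deriv_Dpow i] at h1
        rw [td_cmul (f := fun t => DD t ^ i * deriv expm1Div t)
            ((contDiff_DD.pow i).mul contDiff_deriv_expm1Div) ((i:ℝ)+1)] at h1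
        have hi : ((i:ℝ)+1) ≠ 0 := by positivity
        field_simp
        push_cast at h1 ⊢
        linarith [h1]
      have e1 : td (fun t => expm1Div t ^ y) (m+1)
          = (y/((m:ℝ)+1)) * td (fun t => expm1Div t ^ (y-1) * deriv expm1Div t) m := by
        field_simp
        linarith [hstep]
      rw [e1, hswap]
      have e2 : ∀ i ∈ range (m+1), fallingFac (y-1) i / (i.factorial:ℝ) *
            (∑ k ∈ range (m+1), td (fun t => DD t ^ i) k * td (deriv expm1Div) (m-k))
          = fallingFac (y-1) i / (i.factorial:ℝ) *
              (((m:ℝ)+1)/((i:ℝ)+1) * td (fun t => DD t^(i+1)) (m+1)) := by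
        intro i _
        rw [← td_mul (contDiff_DD.pow i) contDiff_deriv_expm1Div m, hDp i]
      rw [Finset.sum_congr rfl e2]
      rw [Finset.sum_range_succ'
        (fun i => fallingFac y i / (i.factorial:ℝ) * td (fun t => DD t ^ i) (m+1)) (m+1)]
      have hzero : td (fun t => DD t ^ 0) (m+1) = 0 := by
        rw [show (fun t : ℝ => DD t ^ 0) = fun _ : ℝ => (1:ℝ) by funext t; rw [pow_zero], td_one]
        simp
      rw [hzero, Finset.mul_sum]
      simp only [mul_zero, add_zero]
      apply Finset.sum_congr rfl
      intro i _
      have hfac : ((i+1).factorial : ℝ) = ((i:ℝ)+1) * (i.factorial : ℝ) := by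
        rw [Nat.factorial_succ]; push_cast; ring
      rw [fallingFac_succ, hfac]
      have hi : ((i:ℝ)+1) ≠ 0 := by positivity
      have hif : (i.factorial : ℝ) ≠ 0 := by positivity
      field_simp


lemma choose_fac_identity {n i j : ℕ} (hj : j ≤ i) :
    (n.factorial : ℝ) * (i.choose j : ℝ) * (j.factorial : ℝ) /
      ((i.factorial : ℝ) * ((n+j).factorial : ℝ))
    = (n.factorial : ℝ) * ((n+i).choose (i-j) : ℝ) / ((n+i).factorial : ℝ) := by
  have A := Nat.choose_mul_factorial_mul_factorial hj
  have B := Nat.choose_mul_factorial_mul_factorial (show i - j ≤ n + i by omega)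
  rw [show n + i - (i - j) = n + j by omega] at B
  have A' : (i.choose j : ℝ) * (j.factorial : ℝ) * ((i-j).factorial : ℝ)
      = (i.factorial : ℝ) := by exact_mod_cast congrArg Nat.cast A
  have B' : ((n+i).choose (i-j) : ℝ) * ((i-j).factorial : ℝ) * ((n+j).factorial : ℝ)
      = ((n+i).factorial : ℝ) := by exact_mod_cast congrArg Nat.cast B
  rw [div_eq_div_iff (by positivity) (by positivity)]
  apply mul_right_cancel₀ (show ((i-j).factorial : ℝ) ≠ 0 by positivity)
  linear_combination ((n.factorial : ℝ) * ((n+i).factorial : ℝ)) * A'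
    - ((n.factorial : ℝ) * (i.factorial : ℝ)) * B'

theorem higherBernoulliNumber_closed_form (n : ℕ) (α : ℝ) :
    higherBernoulli n α 0 =
      ∑ i ∈ Finset.range (n + 1), fallingFac (-α) i *
        ((n.factorial : ℝ) / ((n + i).factorial : ℝ)) *
        ∑ j ∈ Finset.range (i + 1),
          (-1 : ℝ) ^ (i - j) * ((n + i).choose (i - j) : ℝ) * (stirling (n + j) j : ℝ) := by
  have hfun : (fun t => expm1Div t ^ (-α) * Real.exp ((0:ℝ) * t))
      = fun t => expm1Div t ^ (-α) := by
    funext t; simp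
  have h0 : higherBernoulli n α 0 = (n.factorial : ℝ) * td (fun t => expm1Div t ^ (-α)) n := by
    rw [higherBernoulli, hfun, td]
    field_simp
  rw [h0, key n (-α), Finset.mul_sum]
  apply Finset.sum_congr rfl
  intro i hi
  rw [td_Dpow i n, Finset.mul_sum, Finset.mul_sum, Finset.mul_sum]
  apply Finset.sum_congr rfl
  intro j hj
  have hj' : j ≤ i := Finset.mem_range_succ_iff.mp hj
  have hkey := choose_fac_identity (n := n) hj'
  have hne1 : ((i.factorial : ℝ)) ≠ 0 := by positivity
  have hne2 : (((n+j).factorial : ℝ)) ≠ 0 := by positivity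
  have hne3 : (((n+i).factorial : ℝ)) ≠ 0 := by positivity
  calc (n.factorial : ℝ) * (fallingFac (-α) i / (i.factorial:ℝ) *
          ((i.choose j : ℝ) * (-1:ℝ)^(i-j) *
            ((j.factorial : ℝ) * (stirling (n+j) j : ℝ) / ((n+j).factorial : ℝ))))
      = (fallingFac (-α) i * ((-1:ℝ)^(i-j) * (stirling (n+j) j : ℝ))) *
          ((n.factorial : ℝ) * (i.choose j : ℝ) * (j.factorial : ℝ) /
            ((i.factorial : ℝ) * ((n+j).factorial : ℝ))) := by
        field_simp
    _ = (fallingFac (-α) i * ((-1:ℝ)^(i-j) * (stirling (n+j) j : ℝ))) *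
          ((n.factorial : ℝ) * ((n+i).choose (i-j) : ℝ) / ((n+i).factorial : ℝ)) := by
        rw [hkey]
    _ = _ := by
        field_simp
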